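/- Let 0 < a_1 ≤ ... ≤ a_n be integers, t > 1 with t ≤ n/2, and T ∈ H_t. Then the family V of subsets of [2t-1] whose weight Σ_{i∈F} a_i equals any fixed positive integer k' does not shatter T. -/

import Mathlib

def Ht (n t : ℕ) (T : Finset ℕ) : Prop :=
  T ⊆ Finset.Icc 1 n ∧ T.card = t ∧
  (∀ s ∈ T, (T.filter (· ≤ s)).card < t → 2 * (T.filter (· ≤ s)).card ≤ s) ∧
  (∀ s ∈ T, (T.filter (· ≤ s)).card = t → s < 2 * t)

/-- for `0 < a₁ ≤ … ≤ a_n`, `1 < t ≤ n/2`, `T ∈ H_t` and any fixed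
positive integer `k'`, the family `{F ⊆ [2t-1] : Σ_{i∈F} aᵢ = k'}` does not
shatter `T`. -/
theorem stmt10 (n t : ℕ) (a : ℕ → ℕ)
    (hpos : ∀ i ∈ Finset.Icc 1 n, 0 < a i)
    (hmono : ∀ i j, 1 ≤ i → i ≤ j → j ≤ n → a i ≤ a j)
    (ht : 1 < t) (htn : 2 * t ≤ n) (T : Finset ℕ) (hT : Ht n t T)
    (k' : ℕ) (hk' : 0 < k') :
    ¬ (∀ Y ⊆ T, ∃ F, F ⊆ Finset.Icc 1 (2 * t - 1) ∧
        (∑ i ∈ F, a i) = k' ∧ F ∩ T = Y) := by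
  intro hsh
  obtain ⟨hTsub, hTcard, hltc, heqc⟩ := hT
  have hTne : T.Nonempty := Finset.card_pos.mp (by rw [hTcard]; omega)
  -- the maximum of T equals 2t-1
  have hmT : T.max' hTne ∈ T := T.max'_mem hTne
  have hfm : T.filter (· ≤ T.max' hTne) = T :=
    Finset.filter_true_of_mem (fun z hz => T.le_max' z hz)
  have hmlt : T.max' hTne < 2 * t := heqc _ hmT (by rw [hfm, hTcard])
  have hTE : (T.erase (T.max' hTne)).Nonempty := by
    rw [← Finset.card_pos, Finset.card_erase_of_mem hmT, hTcard]; omega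
  have hm'T : (T.erase (T.max' hTne)).max' hTE ∈ T :=
    Finset.mem_of_mem_erase ((T.erase (T.max' hTne)).max'_mem hTE)
  have hm'ne : (T.erase (T.max' hTne)).max' hTE ≠ T.max' hTne :=
    Finset.ne_of_mem_erase ((T.erase (T.max' hTne)).max'_mem hTE)
  have hm'lt : (T.erase (T.max' hTne)).max' hTE < T.max' hTne :=
    lt_of_le_of_ne (T.le_max' _ hm'T) hm'ne
  have hfm' : T.filter (· ≤ (T.erase (T.max' hTne)).max' hTE) = T.erase (T.max' hTne) := by
    ext z
    simp only [Finset.mem_filter, Finset.mem_erase]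
    constructor
    · rintro ⟨hz, hzle⟩; exact ⟨by omega, hz⟩
    · rintro ⟨hzne, hz⟩
      exact ⟨hz, (T.erase (T.max' hTne)).le_max' z (Finset.mem_erase.mpr ⟨hzne, hz⟩)⟩
  have h2m' : 2 * (t - 1) ≤ (T.erase (T.max' hTne)).max' hTE := by
    have h := hltc _ hm'T (by rw [hfm', Finset.card_erase_of_mem hmT, hTcard]; omega)
    rw [hfm', Finset.card_erase_of_mem hmT, hTcard] at h
    exact h
  have hmN : T.max' hTne = 2 * t - 1 := by omega
  have hNT : (2 * t - 1) ∈ T := hmN ▸ hmT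
  have hTN : T ⊆ Finset.Icc 1 (2 * t - 1) := by
    intro z hz
    have h1 := hTsub hz
    rw [Finset.mem_Icc] at h1 ⊢
    exact ⟨h1.1, hmN ▸ T.le_max' z hz⟩
  -- counting lemma
  have hB : ∀ x, x ≤ 2 * t - 2 → 2 * (T.filter (· ≤ x)).card ≤ x + 1 := by
    intro x hx
    by_cases hne : (T.filter (· ≤ x)).Nonempty
    · have hsmem := (T.filter (· ≤ x)).max'_mem hne
      rw [Finset.mem_filter] at hsmem
      have hfeq : T.filter (· ≤ (T.filter (· ≤ x)).max' hne) = T.filter (· ≤ x) := by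
        apply Finset.Subset.antisymm
        · intro z hz
          have hz' := Finset.mem_filter.mp hz
          exact Finset.mem_filter.mpr ⟨hz'.1, le_trans hz'.2 hsmem.2⟩
        · intro z hz
          have hz' := Finset.mem_filter.mp hz
          exact Finset.mem_filter.mpr ⟨hz'.1, (T.filter (· ≤ x)).le_max' z hz⟩
      have hcard_lt : (T.filter (· ≤ x)).card < t := by
        rcases lt_or_ge (T.filter (· ≤ x)).card t with h | h
        · exact h
        · exfalso
          have heqT : T.filter (· ≤ x) = T :=
            Finset.eq_of_subset_of_card_le (Finset.filter_subset _ _) (by rw [hTcard]; exact h)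
          have : (2 * t - 1) ∈ T.filter (· ≤ x) := by rw [heqT]; exact hNT
          rw [Finset.mem_filter] at this
          omega
      have hh := hltc _ hsmem.1 (by rw [hfeq]; exact hcard_lt)
      rw [hfeq] at hh
      have := hsmem.2
      omega
    · rw [Finset.not_nonempty_iff_eq_empty] at hne
      rw [hne]; simp
  -- filter card comparison between D and T
  have hcards : ∀ y, 1 ≤ y → y ≤ 2 * t - 1 →
      (((Finset.Icc 1 (2 * t - 1)) \ T).filter (fun z => y ≤ z)).card ≤
        (T.filter (fun z => y ≤ z)).card := by
    intro y h1 h2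
    have hxT : (T.filter (· ≤ y - 1)).card + (T.filter (fun z => y ≤ z)).card = t := by
      have hpart := Finset.card_filter_add_card_filter_not (s := T)
        (p := fun z => z ≤ y - 1)
      have hneg : T.filter (fun z => ¬ z ≤ y - 1) = T.filter (fun z => y ≤ z) := by
        apply Finset.filter_congr
        intro z _
        omega
      rw [hneg, hTcard] at hpart
      exact hpart
    have hxD : ((((Finset.Icc 1 (2 * t - 1)) \ T)).filter (· ≤ y - 1)).card +
        ((((Finset.Icc 1 (2 * t - 1)) \ T)).filter (fun z => y ≤ z)).card =
        (((Finset.Icc 1 (2 * t - 1)) \ T)).card := by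
      have hpart := Finset.card_filter_add_card_filter_not
        (s := (Finset.Icc 1 (2 * t - 1)) \ T) (p := fun z => z ≤ y - 1)
      have hneg : (((Finset.Icc 1 (2 * t - 1)) \ T)).filter (fun z => ¬ z ≤ y - 1) =
          (((Finset.Icc 1 (2 * t - 1)) \ T)).filter (fun z => y ≤ z) := by
        apply Finset.filter_congr
        intro z _
        omega
      rw [hneg] at hpart
      exact hpart
    have hDcard : (((Finset.Icc 1 (2 * t - 1)) \ T)).card = t - 1 := by
      rw [Finset.card_sdiff_of_subset hTN, Nat.card_Icc, hTcard]; omega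
    have hIx : ((Finset.Icc 1 (2 * t - 1)).filter (· ≤ y - 1)).card = y - 1 := by
      have : (Finset.Icc 1 (2 * t - 1)).filter (· ≤ y - 1) = Finset.Icc 1 (y - 1) := by
        ext z
        simp only [Finset.mem_filter, Finset.mem_Icc]
        omega
      rw [this, Nat.card_Icc]
      omega
    have hDf : (((Finset.Icc 1 (2 * t - 1)) \ T)).filter (· ≤ y - 1) =
        (Finset.Icc 1 (2 * t - 1)).filter (· ≤ y - 1) \ T.filter (· ≤ y - 1) := by
      ext z
      simp only [Finset.mem_filter, Finset.mem_sdiff]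
      tauto
    have hsubf : T.filter (· ≤ y - 1) ⊆ (Finset.Icc 1 (2 * t - 1)).filter (· ≤ y - 1) :=
      Finset.filter_subset_filter _ hTN
    have hsplit : ((((Finset.Icc 1 (2 * t - 1)) \ T)).filter (· ≤ y - 1)).card =
        (y - 1) - (T.filter (· ≤ y - 1)).card := by
      rw [hDf, Finset.card_sdiff_of_subset hsubf, hIx]
    have hjle : (T.filter (· ≤ y - 1)).card ≤ y - 1 := by
      calc (T.filter (· ≤ y - 1)).card ≤ ((Finset.Icc 1 (2 * t - 1)).filter (· ≤ y - 1)).card :=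
            Finset.card_le_card hsubf
        _ = y - 1 := hIx
    have hBB := hB (y - 1) (by omega)
    omega
  -- telescoping
  have htele : ∀ x, 1 ≤ x → x ≤ 2 * t - 1 →
      (∑ y ∈ Finset.Icc 1 x, (if y = 1 then a 1 else a y - a (y - 1))) = a x := by
    intro x h1
    induction x, h1 using Nat.le_induction with
    | base => intro _; simp
    | succ x hx ih =>
      intro hxN
      rw [Finset.sum_Icc_succ_top (by omega), ih (by omega)]
      rw [if_neg (by omega)]
      have hle : a x ≤ a (x + 1) := hmono x (x + 1) hx (by omega) (by omega)
      simp only [Nat.add_sub_cancel]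
      omega
  -- key sum formula
  have hkey : ∀ S : Finset ℕ, S ⊆ Finset.Icc 1 (2 * t - 1) →
      ∑ x ∈ S, a x = ∑ y ∈ Finset.Icc 1 (2 * t - 1),
        (if y = 1 then a 1 else a y - a (y - 1)) * (S.filter (fun z => y ≤ z)).card := by
    intro S hS
    have h1 : ∀ x ∈ S, a x = ∑ y ∈ Finset.Icc 1 (2 * t - 1),
        (if y ≤ x then (if y = 1 then a 1 else a y - a (y - 1)) else 0) := by
      intro x hx
      have hx' := hS hx
      rw [Finset.mem_Icc] at hx'
      rw [← htele x hx'.1 hx'.2, ← Finset.sum_filter]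
      congr 1
      ext z
      simp only [Finset.mem_filter, Finset.mem_Icc]
      omega
    rw [Finset.sum_congr rfl h1, Finset.sum_comm]
    apply Finset.sum_congr rfl
    intro y _
    rw [← Finset.sum_filter, Finset.sum_const, smul_eq_mul, mul_comm]
  -- main inequality
  have hlt_sum : ∑ x ∈ ((Finset.Icc 1 (2 * t - 1)) \ T), a x < ∑ x ∈ T, a x := by
    rw [hkey _ (Finset.sdiff_subset), hkey T hTN]
    apply Finset.sum_lt_sum
    · intro y hy
      rw [Finset.mem_Icc] at hy
      exact Nat.mul_le_mul_left _ (hcards y hy.1 hy.2)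
    · refine ⟨1, Finset.mem_Icc.mpr ⟨le_refl 1, by omega⟩, ?_⟩
      have hDfull : (((Finset.Icc 1 (2 * t - 1)) \ T)).filter (fun z => 1 ≤ z) =
          ((Finset.Icc 1 (2 * t - 1)) \ T) := by
        apply Finset.filter_true_of_mem
        intro z hz
        have := (Finset.mem_sdiff.mp hz).1
        rw [Finset.mem_Icc] at this
        omega
      have hTfull : T.filter (fun z => 1 ≤ z) = T := by
        apply Finset.filter_true_of_mem
        intro z hz
        exact (Finset.mem_Icc.mp (hTsub hz)).1
      have hDcard : (((Finset.Icc 1 (2 * t - 1)) \ T)).card = t - 1 := by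
        rw [Finset.card_sdiff_of_subset hTN, Nat.card_Icc, hTcard]; omega
      rw [hDfull, hTfull, hDcard, hTcard, if_pos rfl]
      have ha1 : 0 < a 1 := hpos 1 (Finset.mem_Icc.mpr ⟨le_refl 1, by omega⟩)
      have h3 : t - 1 < t := by omega
      exact Nat.mul_lt_mul_of_pos_left h3 ha1
  -- conclude
  obtain ⟨F1, hF1sub, hF1sum, hF1cap⟩ := hsh T (Finset.Subset.refl T)
  obtain ⟨F0, hF0sub, hF0sum, hF0cap⟩ := hsh ∅ (Finset.empty_subset T)
  have hTF1 : T ⊆ F1 := by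
    intro z hz
    have hz2 : z ∈ F1 ∩ T := by rw [hF1cap]; exact hz
    exact (Finset.mem_inter.mp hz2).1
  have h1 : ∑ x ∈ T, a x ≤ k' := by
    rw [← hF1sum]; exact Finset.sum_le_sum_of_subset hTF1
  have hF0D : F0 ⊆ (Finset.Icc 1 (2 * t - 1)) \ T := by
    intro z hz
    rw [Finset.mem_sdiff]
    refine ⟨hF0sub hz, fun hzT => ?_⟩
    have hz2 : z ∈ F0 ∩ T := Finset.mem_inter.mpr ⟨hz, hzT⟩
    rw [hF0cap] at hz2
    exact absurd hz2 (Finset.notMem_empty z)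
  have h0 : k' ≤ ∑ x ∈ (Finset.Icc 1 (2 * t - 1)) \ T, a x := by
    rw [← hF0sum]; exact Finset.sum_le_sum_of_subset hF0D
  omega
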